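/- Let {V_n : n ∈ ℕ} be a family of pairwise disjoint countable subsets of the open square J̊² = (-1,1)², and {W_n : n ∈ ℕ} a family of pairwise disjoint subsets of J̊², such that each V_n and each W_n is dense in J². Then for every λ > 1 and every ε > 0 there exists a λ-homeomorphism h : J² → J² such that h restricted to ∂J² is the identity, d(h(x),x) < ε for every x ∈ J², and h(V_n) ⊆ W_n for every n ∈ ℕ. -/

import Mathlib

open Set
open scoped Classical

noncomputable def phiB (p : ℂ) (r : ℝ) (x : ℂ) : ℝ := max 0 (1 - dist x p / r)

lemma exists_bump (p w : ℂ) (r t : ℝ) (hr : 0 < r) (ht0 : 0 ≤ t) (ht : t ≤ 1/2)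
    (hwp : dist w p ≤ t * r) :
    ∃ g g' : ℂ → ℂ,
      (∀ x y, dist (g x) (g y) ≤ (1+t) * dist x y) ∧
      (∀ x y, (1-t) * dist x y ≤ dist (g x) (g y)) ∧
      (∀ x, g' (g x) = x) ∧ (∀ y, g (g' y) = y) ∧
      (∀ x, dist (g x) x ≤ dist w p) ∧
      (∀ x, r ≤ dist x p → g x = x) ∧
      (∀ x, dist x p ≤ r → dist (g x) p ≤ r) ∧
      g p = w := by
  set φ := phiB p r with hφdef
  have hφ0 : ∀ x, 0 ≤ φ x := fun x => le_max_left _ _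
  have hφ1 : ∀ x, φ x ≤ 1 := by
    intro x
    apply max_le (by norm_num)
    have : 0 ≤ dist x p / r := div_nonneg dist_nonneg hr.le
    linarith
  have hφlip : ∀ x y, |φ x - φ y| ≤ dist x y / r := by
    intro x y
    have h1 : |φ x - φ y| = |(1 - dist x p / r) ⊔ 0 - (1 - dist y p / r) ⊔ 0| := by
      simp [hφdef, phiB, max_comm]
    rw [h1]
    calc |(1 - dist x p / r) ⊔ 0 - (1 - dist y p / r) ⊔ 0|
        ≤ |(1 - dist x p / r) - (1 - dist y p / r)| := abs_max_sub_max_le_abs _ _ _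
      _ = |dist y p - dist x p| / r := by
          have h2 : 1 - dist x p / r - (1 - dist y p / r) = (dist y p - dist x p) / r := by
            field_simp
            ring
          rw [h2, abs_div, abs_of_pos hr]
      _ ≤ dist x y / r := by
          have h3 := abs_dist_sub_le y x p
          rw [dist_comm y x] at h3
          gcongr
  -- the perturbation
  set f : ℂ → ℂ := fun x => (φ x : ℂ) • (w - p) with hfdef
  have hfsub : ∀ x y, ‖f x - f y‖ ≤ t * dist x y := by
    intro x y
    have h1 : f x - f y = ((φ x - φ y : ℝ) : ℂ) • (w - p) := by
      simp only [hfdef]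
      push_cast
      rw [sub_smul]
    rw [h1, norm_smul]
    have h2 : ‖((φ x - φ y : ℝ) : ℂ)‖ = |φ x - φ y| := Complex.norm_real _
    rw [h2]
    calc |φ x - φ y| * ‖w - p‖ ≤ (dist x y / r) * ‖w - p‖ := by
          apply mul_le_mul_of_nonneg_right (hφlip x y) (norm_nonneg _)
      _ ≤ (dist x y / r) * (t * r) := by
          apply mul_le_mul_of_nonneg_left ?_ (div_nonneg dist_nonneg hr.le)
          rwa [← dist_eq_norm]
      _ = t * dist x y := by field_simp
  set g : ℂ → ℂ := fun x => x + f x with hgdef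
  have hup : ∀ x y, dist (g x) (g y) ≤ (1+t) * dist x y := by
    intro x y
    have h3 : g x - g y = (x - y) + (f x - f y) := by simp only [hgdef]; ring
    rw [dist_eq_norm, h3]
    calc ‖(x - y) + (f x - f y)‖ ≤ ‖x - y‖ + ‖f x - f y‖ := norm_add_le _ _
      _ ≤ ‖x - y‖ + t * dist x y := by linarith [hfsub x y]
      _ = (1+t) * dist x y := by rw [dist_eq_norm]; ring
  have hlow : ∀ x y, (1-t) * dist x y ≤ dist (g x) (g y) := by
    intro x y
    have h3 : g x - g y = (x - y) + (f x - f y) := by simp only [hgdef]; ring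
    have h4 : ‖x - y‖ - ‖f x - f y‖ ≤ ‖(x - y) + (f x - f y)‖ := by
      have h5 := norm_sub_norm_le (x - y) (-(f x - f y))
      rw [norm_neg, sub_neg_eq_add] at h5
      exact h5
    rw [dist_eq_norm (g x) (g y), h3, dist_eq_norm x y]
    nlinarith [hfsub x y, dist_eq_norm x y, norm_nonneg (x - y)]
  -- injectivity
  have hinj : Function.Injective g := by
    intro x y hxy
    have := hlow x y
    rw [hxy, dist_self] at this
    have ht1 : (0:ℝ) < 1 - t := by linarith
    have : dist x y ≤ 0 := by nlinarith
    exact dist_le_zero.mp this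
  -- surjectivity via contraction
  have hsurj : ∀ y, ∃ x, g x = y := by
    intro y
    have hK : (⟨1/2, by norm_num⟩ : NNReal) < 1 := by
      show (1/2 : ℝ) < 1; norm_num
    have hcon : ContractingWith ⟨1/2, by norm_num⟩ (fun x => y - f x) := by
      constructor
      · exact hK
      · apply LipschitzWith.of_dist_le_mul
        intro a b
        show _ ≤ (1/2 : ℝ) * dist a b
        calc dist (y - f a) (y - f b) = ‖f b - f a‖ := by
              rw [dist_eq_norm]; congr 1; ring
          _ ≤ t * dist b a := hfsub b a
          _ ≤ (1/2) * dist a b := by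
              rw [dist_comm b a]
              apply mul_le_mul_of_nonneg_right ht dist_nonneg
    refine ⟨hcon.fixedPoint _, ?_⟩
    have hfix := hcon.fixedPoint_isFixedPt
    simp only [Function.IsFixedPt] at hfix
    simp only [hgdef]
    linear_combination -hfix
  set g' : ℂ → ℂ := fun y => Classical.choose (hsurj y) with hg'def
  have hgg' : ∀ y, g (g' y) = y := fun y => Classical.choose_spec (hsurj y)
  have hg'g : ∀ x, g' (g x) = x := by
    intro x
    apply hinj
    rw [hgg' (g x)]
  have hnear : ∀ x, dist (g x) x ≤ dist w p := by
    intro x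
    have h1 : dist (g x) x = ‖f x‖ := by
      rw [dist_eq_norm]
      congr 1
      simp only [hgdef]
      ring
    rw [h1]
    have h2 : ‖f x‖ = φ x * ‖w - p‖ := by
      simp only [hfdef, norm_smul, Complex.norm_real, Real.norm_eq_abs,
        abs_of_nonneg (hφ0 x)]
    rw [h2, dist_eq_norm]
    nlinarith [hφ1 x, hφ0 x, norm_nonneg (w - p)]
  have hid : ∀ x, r ≤ dist x p → g x = x := by
    intro x hx
    have hφx : φ x = 0 := by
      simp only [hφdef, phiB]
      apply max_eq_left
      rw [sub_nonpos, le_div_iff₀ hr]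
      linarith
    simp only [hgdef, hfdef, hφx]
    simp
  have hball : ∀ x, dist x p ≤ r → dist (g x) p ≤ r := by
    intro x hx
    have hφx : φ x = 1 - dist x p / r := by
      simp only [hφdef, phiB]
      apply max_eq_right
      rw [sub_nonneg, div_le_one hr]
      exact hx
    have h1 : dist (g x) p ≤ dist x p + ‖f x‖ := by
      calc dist (g x) p ≤ dist (g x) x + dist x p := dist_triangle _ _ _
        _ = ‖f x‖ + dist x p := by
            congr 1
            rw [dist_eq_norm]
            congr 1
            simp only [hgdef]; ring
        _ = dist x p + ‖f x‖ := by ring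
    have h2 : ‖f x‖ = φ x * ‖w - p‖ := by
      simp only [hfdef, norm_smul, Complex.norm_real, Real.norm_eq_abs,
        abs_of_nonneg (hφ0 x)]
    have h3 : ‖w - p‖ ≤ t * r := by rw [← dist_eq_norm]; exact hwp
    have h4 : ‖w - p‖ ≤ r := by nlinarith
    have h5 : 0 ≤ 1 - dist x p / r := by
      rw [sub_nonneg, div_le_one hr]; exact hx
    have h6 : dist x p / r * r = dist x p := by field_simp
    have h7 : 0 ≤ ‖w - p‖ := norm_nonneg _
    calc dist (g x) p ≤ dist x p + φ x * ‖w - p‖ := by rw [← h2]; exact h1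
      _ ≤ dist x p + (1 - dist x p / r) * r := by
          rw [hφx]
          nlinarith
      _ = r := by field_simp; ring
  have hgp : g p = w := by
    have hφp : φ p = 1 := by
      simp [hφdef, phiB, hr.le]
    simp only [hgdef, hfdef, hφp]
    simp
  exact ⟨g, g', hup, hlow, hg'g, hgg', hnear, hid, hball, hgp⟩

lemma exists_small_r (p : ℂ) (ρ : ℝ) (hρ : 0 < ρ) (F : List ℂ) (hF : p ∉ F) :
    ∃ r, 0 < r ∧ r < ρ ∧ ∀ q ∈ F, r < dist q p := by
  induction F with
  | nil => exact ⟨ρ/2, by linarith, by linarith, by simp⟩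
  | cons a F ih =>
    have hpa : p ≠ a := fun h => hF (h ▸ List.mem_cons_self (a := a) (l := F))
    have hpF : p ∉ F := fun h => hF (List.mem_cons_of_mem a h)
    obtain ⟨r, hr0, hrρ, hrF⟩ := ih hpF
    have hda : 0 < dist a p := dist_pos.mpr (fun h => hpa h.symm)
    refine ⟨min r (dist a p / 2), ?_, ?_, ?_⟩
    · positivity
    · exact lt_of_le_of_lt (min_le_left _ _) hrρ
    · intro q hq
      rcases List.mem_cons.mp hq with h | h
      · subst h
        exact lt_of_le_of_lt (min_le_right _ _) (by linarith)
      · exact lt_of_le_of_lt (min_le_left _ _) (hrF q h)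

section Core

variable (U : Set ℂ) (Wc : ℕ → Set ℂ) (ee : ℕ → ℂ × ℕ) (tt dd : ℕ → ℝ)

/-- Specification of one bump step. -/
def Spec (k : ℕ) (H : ℂ → ℂ) (q : ℕ → ℂ) (gg : (ℂ → ℂ) × (ℂ → ℂ)) : Prop :=
  (∀ x y, dist (gg.1 x) (gg.1 y) ≤ (1 + tt k) * dist x y) ∧
  (∀ x y, (1 - tt k) * dist x y ≤ dist (gg.1 x) (gg.1 y)) ∧
  (∀ x, gg.2 (gg.1 x) = x) ∧ (∀ y, gg.1 (gg.2 y) = y) ∧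
  (∀ x, dist (gg.1 x) x ≤ dd k) ∧
  (∀ x ∈ U, gg.1 x ∈ U) ∧ (∀ x ∉ U, gg.1 x = x) ∧
  (∀ j < k, gg.1 (q j) = q j) ∧
  (gg.1 (H (ee k).1) ∈ Wc (ee k).2)

/-- The recursion state: current composed map, its inverse, placed points. -/
noncomputable def SS : ℕ → (ℂ → ℂ) × (ℂ → ℂ) × (ℕ → ℂ)
  | 0 => ⟨id, id, fun _ => 0⟩
  | k + 1 =>
    let st := SS k
    if h : ∃ gg : (ℂ → ℂ) × (ℂ → ℂ), Spec U Wc ee tt dd k st.1 st.2.2 gg then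
      let gg := Classical.choose h
      ⟨gg.1 ∘ st.1, st.2.1 ∘ gg.2, Function.update st.2.2 k (gg.1 (st.1 (ee k).1))⟩
    else st

end Core

section Core2

variable {U : Set ℂ} {Wc : ℕ → Set ℂ} {ee : ℕ → ℂ × ℕ} {tt dd : ℕ → ℝ}

lemma spec_exists (k : ℕ) (H : ℂ → ℂ) (q : ℕ → ℂ)
    (hU : IsOpen U)
    (hp : H (ee k).1 ∈ U)
    (hdense : ∀ r > 0, ∃ w ∈ Wc (ee k).2, dist w (H (ee k).1) < r)
    (ht0 : 0 < tt k) (ht : tt k ≤ 1/2) (hd : 0 < dd k)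
    (hq : ∀ j < k, q j = H (ee j).1 ∧ q j ∈ Wc (ee j).2)
    (hHinj : Function.Injective H)
    (hsame : ∀ j, (ee j).1 = (ee k).1 → (ee j).2 = (ee k).2) :
    ∃ gg, Spec U Wc ee tt dd k H q gg := by
  set p := H (ee k).1 with hpdef
  by_cases hdup : ∃ j, j < k ∧ q j = p
  · obtain ⟨j, hjk, hqj⟩ := hdup
    refine ⟨⟨id, id⟩, ?_, ?_, fun x => rfl, fun y => rfl, ?_, fun x hx => hx,
      fun x _ => rfl, fun j _ => rfl, ?_⟩
    · intro x y
      simp only [id]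
      nlinarith [dist_nonneg (x := x) (y := y)]
    · intro x y
      simp only [id]
      nlinarith [dist_nonneg (x := x) (y := y)]
    · intro x
      simp [hd.le]
    · have h1 := (hq j hjk).1
      have h2 := (hq j hjk).2
      have h3 : (ee j).1 = (ee k).1 := hHinj (by rw [← h1, hqj])
      have h4 : (ee j).2 = (ee k).2 := hsame j h3
      simp only [id]
      rw [← hpdef, ← hqj, ← h4]
      exact h2
  · -- p is fresh: construct a genuine bump
    have hpL : p ∉ (List.range k).map q := by
      intro hmem
      obtain ⟨j, hj, hqj⟩ := List.mem_map.mp hmem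
      exact hdup ⟨j, List.mem_range.mp hj, hqj⟩
    obtain ⟨ρ, hρ0, hρU⟩ := Metric.isOpen_iff.mp hU p hp
    obtain ⟨r, hr0, hrρ, hrF⟩ := exists_small_r p ρ hρ0 _ hpL
    have hmin : 0 < min (tt k * r) (dd k) := lt_min (by positivity) hd
    obtain ⟨w, hwW, hwp⟩ := hdense _ hmin
    have hwp1 : dist w p ≤ tt k * r := le_of_lt (lt_of_lt_of_le hwp (min_le_left _ _))
    have hwp2 : dist w p < dd k := lt_of_lt_of_le hwp (min_le_right _ _)
    obtain ⟨g, g', hup, hlow, hg'g, hgg', hnear, hid, hball, hgp⟩ :=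
      exists_bump p w r (tt k) hr0 ht0.le ht hwp1
    refine ⟨⟨g, g'⟩, hup, hlow, hg'g, hgg', ?_, ?_, ?_, ?_, ?_⟩
    · intro x
      exact le_of_lt (lt_of_le_of_lt (hnear x) hwp2)
    · intro x hx
      rcases le_or_gt (dist x p) r with h | h
      · exact hρU (Metric.mem_ball.mpr (lt_of_le_of_lt (hball x h) hrρ))
      · show g x ∈ U
        rw [hid x h.le]; exact hx
    · intro x hx
      apply hid
      by_contra hcon
      push_neg at hcon
      exact hx (hρU (Metric.mem_ball.mpr (lt_trans hcon hrρ)))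
    · intro j hjk
      exact hid _ (le_of_lt (hrF _ (List.mem_map.mpr ⟨j, List.mem_range.mpr hjk, rfl⟩)))
    · show g (H (ee k).1) ∈ Wc (ee k).2
      rw [← hpdef, hgp]; exact hwW

end Core2

section Core3

variable {U : Set ℂ} {Wc : ℕ → Set ℂ} {ee : ℕ → ℂ × ℕ} {tt dd : ℕ → ℝ}

/-- The invariant maintained along the recursion. -/
def InvP (U : Set ℂ) (Wc : ℕ → Set ℂ) (ee : ℕ → ℂ × ℕ) (tt dd : ℕ → ℝ) (k : ℕ) : Prop :=
  (∀ x y, dist ((SS U Wc ee tt dd k).1 x) ((SS U Wc ee tt dd k).1 y) ≤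
      (∏ j ∈ Finset.range k, (1 + tt j)) * dist x y) ∧
  (∀ x y, (∏ j ∈ Finset.range k, (1 - tt j)) * dist x y ≤
      dist ((SS U Wc ee tt dd k).1 x) ((SS U Wc ee tt dd k).1 y)) ∧
  (∀ x, (SS U Wc ee tt dd k).2.1 ((SS U Wc ee tt dd k).1 x) = x) ∧
  (∀ y, (SS U Wc ee tt dd k).1 ((SS U Wc ee tt dd k).2.1 y) = y) ∧
  (∀ x ∈ U, (SS U Wc ee tt dd k).1 x ∈ U) ∧
  (∀ x ∉ U, (SS U Wc ee tt dd k).1 x = x) ∧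
  (∀ j < k, (SS U Wc ee tt dd k).2.2 j = (SS U Wc ee tt dd k).1 (ee j).1 ∧
      (SS U Wc ee tt dd k).2.2 j ∈ Wc (ee j).2)

lemma Qprod_pos (htt : ∀ k, 0 < tt k ∧ tt k ≤ 1/2) (k : ℕ) : 0 < ∏ j ∈ Finset.range k, (1 - tt j) := by
  apply Finset.prod_pos
  intro j _
  have := (htt j).1
  have := (htt j).2
  linarith

lemma InvP_inj (htt : ∀ k, 0 < tt k ∧ tt k ≤ 1/2) (k : ℕ) (h : InvP U Wc ee tt dd k) :
    Function.Injective (SS U Wc ee tt dd k).1 := by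
  intro x y hxy
  have h2 := h.2.1 x y
  rw [hxy, dist_self] at h2
  have hQ := Qprod_pos htt k
  have : dist x y ≤ 0 := by nlinarith
  exact dist_le_zero.mp this

lemma SS_step (hU : IsOpen U) (heeU : ∀ k, (ee k).1 ∈ U)
    (hdense : ∀ n, ∀ z ∈ U, ∀ r > 0, ∃ w ∈ Wc n, dist w z < r)
    (htt : ∀ k, 0 < tt k ∧ tt k ≤ 1/2) (hdd : ∀ k, 0 < dd k)
    (hsame : ∀ j k, (ee j).1 = (ee k).1 → (ee j).2 = (ee k).2) (k : ℕ) (h : InvP U Wc ee tt dd k) :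
    ∃ gg, Spec U Wc ee tt dd k (SS U Wc ee tt dd k).1 (SS U Wc ee tt dd k).2.2 gg ∧
      SS U Wc ee tt dd (k+1) = ⟨gg.1 ∘ (SS U Wc ee tt dd k).1,
        (SS U Wc ee tt dd k).2.1 ∘ gg.2,
        Function.update (SS U Wc ee tt dd k).2.2 k
          (gg.1 ((SS U Wc ee tt dd k).1 (ee k).1))⟩ := by
  have hex : ∃ gg, Spec U Wc ee tt dd k (SS U Wc ee tt dd k).1 (SS U Wc ee tt dd k).2.2 gg := by
    apply spec_exists k _ _ hU (h.2.2.2.2.1 _ (heeU k))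
      (hdense _ _ (h.2.2.2.2.1 _ (heeU k))) (htt k).1 (htt k).2 (hdd k)
      (fun j hj => h.2.2.2.2.2.2 j hj) (InvP_inj htt k h) (fun j => hsame j k)
  refine ⟨Classical.choose hex, Classical.choose_spec hex, ?_⟩
  show (let st := SS U Wc ee tt dd k;
    if h : ∃ gg : (ℂ → ℂ) × (ℂ → ℂ), Spec U Wc ee tt dd k st.1 st.2.2 gg then
      let gg := Classical.choose h
      ⟨gg.1 ∘ st.1, st.2.1 ∘ gg.2, Function.update st.2.2 k (gg.1 (st.1 (ee k).1))⟩
    else st) = _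
  rw [dif_pos hex]

lemma InvP_all (hU : IsOpen U) (heeU : ∀ k, (ee k).1 ∈ U)
    (hdense : ∀ n, ∀ z ∈ U, ∀ r > 0, ∃ w ∈ Wc n, dist w z < r)
    (htt : ∀ k, 0 < tt k ∧ tt k ≤ 1/2) (hdd : ∀ k, 0 < dd k)
    (hsame : ∀ j k, (ee j).1 = (ee k).1 → (ee j).2 = (ee k).2) : ∀ k, InvP U Wc ee tt dd k := by
  intro k
  induction k with
  | zero =>
    refine ⟨?_, ?_, fun x => rfl, fun y => rfl, fun x hx => hx, fun x _ => rfl, by omega⟩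
    · intro x y; simp [SS]
    · intro x y; simp [SS]
  | succ k ih =>
    obtain ⟨gg, hspec, hSS⟩ := SS_step hU heeU hdense htt hdd hsame k ih
    obtain ⟨s1, s2, s3, s4, s5, s6, s7, s8, s9⟩ := hspec
    have htk0 := (htt k).1
    have htk1 := (htt k).2
    rw [InvP, hSS]
    dsimp only
    refine ⟨?_, ?_, ?_, ?_, ?_, ?_, ?_⟩
    · intro x y
      simp only [Function.comp]
      rw [Finset.prod_range_succ]
      calc dist (gg.1 ((SS U Wc ee tt dd k).1 x)) (gg.1 ((SS U Wc ee tt dd k).1 y))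
          ≤ (1 + tt k) * dist ((SS U Wc ee tt dd k).1 x) ((SS U Wc ee tt dd k).1 y) := s1 _ _
        _ ≤ (1 + tt k) * ((∏ j ∈ Finset.range k, (1 + tt j)) * dist x y) := by
            apply mul_le_mul_of_nonneg_left (ih.1 x y) (by linarith)
        _ = (∏ j ∈ Finset.range k, (1 + tt j)) * (1 + tt k) * dist x y := by ring
    · intro x y
      simp only [Function.comp]
      rw [Finset.prod_range_succ]
      calc (∏ j ∈ Finset.range k, (1 - tt j)) * (1 - tt k) * dist x y
          = (1 - tt k) * ((∏ j ∈ Finset.range k, (1 - tt j)) * dist x y) := by ring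
        _ ≤ (1 - tt k) * dist ((SS U Wc ee tt dd k).1 x) ((SS U Wc ee tt dd k).1 y) := by
            apply mul_le_mul_of_nonneg_left (ih.2.1 x y) (by linarith)
        _ ≤ dist (gg.1 ((SS U Wc ee tt dd k).1 x)) (gg.1 ((SS U Wc ee tt dd k).1 y)) := s2 _ _
    · intro x
      simp only [Function.comp]
      rw [s3, ih.2.2.1]
    · intro y
      simp only [Function.comp]
      rw [ih.2.2.2.1, s4]
    · intro x hx
      exact s6 _ (ih.2.2.2.2.1 x hx)
    · intro x hx
      simp only [Function.comp]
      rw [ih.2.2.2.2.2.1 x hx]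
      exact s7 x hx
    · intro j hj
      rcases Nat.lt_succ_iff_lt_or_eq.mp hj with hjk | hjk
      · have hne : j ≠ k := Nat.ne_of_lt hjk
        rw [Function.update_of_ne hne]
        have h1 := (ih.2.2.2.2.2.2 j hjk).1
        have h2 := (ih.2.2.2.2.2.2 j hjk).2
        constructor
        · simp only [Function.comp]
          rw [← h1]
          exact (s8 j hjk).symm
        · exact h2
      · subst hjk
        rw [Function.update_self]
        exact ⟨rfl, s9⟩

end Core3

section Core4

lemma core_lemma (U K : Set ℂ) (hU : IsOpen U) (hUK : U ⊆ K) (hKcl : IsClosed K)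
    (Wc : ℕ → Set ℂ) (ee : ℕ → ℂ × ℕ)
    (heeU : ∀ k, (ee k).1 ∈ U)
    (hsame : ∀ j k, (ee j).1 = (ee k).1 → (ee j).2 = (ee k).2)
    (hdense : ∀ n, ∀ z ∈ U, ∀ r > 0, ∃ w ∈ Wc n, dist w z < r)
    (lam ε : ℝ) (hlam : 1 < lam) (hε : 0 < ε) :
    ∃ h : ℂ → ℂ,
      (∀ x y, dist x y / lam ≤ dist (h x) (h y) ∧ dist (h x) (h y) ≤ lam * dist x y) ∧
      (∀ x ∉ U, h x = x) ∧
      (∀ x, dist (h x) x ≤ ε/2) ∧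
      (∀ k, h (ee k).1 ∈ Wc (ee k).2) ∧
      (∀ x ∈ K, h x ∈ K) ∧
      (∀ y ∈ K, ∃ x ∈ K, h x = y) := by
  have hlam0 : (0:ℝ) < lam := by linarith
  have hlog : 0 < Real.log lam := Real.log_pos hlam
  set a : ℝ := min (Real.log lam) 1 / 2 with hadef
  have ha0 : 0 < a := by
    apply div_pos (lt_min hlog (by norm_num)) (by norm_num)
  have ha1 : a ≤ 1/2 := by
    apply div_le_div_of_nonneg_right (min_le_right _ _) (by norm_num) |>.trans_eq rfl
  have ha2 : 2 * a ≤ Real.log lam := by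
    have := min_le_left (Real.log lam) 1
    simp only [hadef]
    linarith
  set tt : ℕ → ℝ := fun k => a/2 * (1/2)^k with httdef
  set dd : ℕ → ℝ := fun k => ε/4 * (1/2)^k with hdddef
  have htt : ∀ k, 0 < tt k ∧ tt k ≤ 1/2 := by
    intro k
    constructor
    · positivity
    · have h1 : (1/2:ℝ)^k ≤ 1 := pow_le_one₀ (by norm_num) (by norm_num)
      have : a/2 * (1/2)^k ≤ a/2 * 1 := by
        apply mul_le_mul_of_nonneg_left h1 (by positivity)
      simp only [httdef]
      linarith
  have hdd : ∀ k, 0 < dd k := by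
    intro k; positivity
  have hsumtt : ∀ k, ∑ j ∈ Finset.range k, tt j ≤ a := by
    intro k
    have h1 : ∑ j ∈ Finset.range k, tt j = a/2 * ∑ j ∈ Finset.range k, (1/2:ℝ)^j := by
      rw [Finset.mul_sum]
    rw [h1]
    have h2 := sum_geometric_two_le k
    calc a/2 * ∑ j ∈ Finset.range k, (1/2:ℝ)^j ≤ a/2 * 2 :=
          mul_le_mul_of_nonneg_left h2 (by positivity)
      _ = a := by ring
  have hP : ∀ k, ∏ j ∈ Finset.range k, (1 + tt j) ≤ lam := by
    intro k
    calc ∏ j ∈ Finset.range k, (1 + tt j)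
        ≤ ∏ j ∈ Finset.range k, Real.exp (tt j) := by
          apply Finset.prod_le_prod
          · intro j _; have := (htt j).1; linarith
          · intro j _; linarith [Real.add_one_le_exp (tt j)]
      _ = Real.exp (∑ j ∈ Finset.range k, tt j) := (Real.exp_sum _ _).symm
      _ ≤ Real.exp (Real.log lam) := by
          apply Real.exp_le_exp.mpr
          linarith [hsumtt k, ha0]
      _ = lam := Real.exp_log hlam0
  have hQ : ∀ k, 1/lam ≤ ∏ j ∈ Finset.range k, (1 - tt j) := by
    intro k
    have hQpos : 0 < ∏ j ∈ Finset.range k, (1 - tt j) := Qprod_pos htt k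
    have hP2 : ∏ j ∈ Finset.range k, (1 + 2 * tt j) ≤ lam := by
      calc ∏ j ∈ Finset.range k, (1 + 2 * tt j)
          ≤ ∏ j ∈ Finset.range k, Real.exp (2 * tt j) := by
            apply Finset.prod_le_prod
            · intro j _; have := (htt j).1; linarith
            · intro j _; linarith [Real.add_one_le_exp (2 * tt j)]
        _ = Real.exp (∑ j ∈ Finset.range k, 2 * tt j) := (Real.exp_sum _ _).symm
        _ ≤ Real.exp (Real.log lam) := by
            apply Real.exp_le_exp.mpr
            have h3 : ∑ j ∈ Finset.range k, 2 * tt j = 2 * ∑ j ∈ Finset.range k, tt j := by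
              rw [Finset.mul_sum]
            rw [h3]
            linarith [hsumtt k]
        _ = lam := Real.exp_log hlam0
    have hkey : (1:ℝ) ≤ (∏ j ∈ Finset.range k, (1 + 2 * tt j)) *
        ∏ j ∈ Finset.range k, (1 - tt j) := by
      rw [← Finset.prod_mul_distrib]
      calc (1:ℝ) = ∏ j ∈ Finset.range k, 1 := by simp
        _ ≤ ∏ j ∈ Finset.range k, (1 + 2 * tt j) * (1 - tt j) := by
            apply Finset.prod_le_prod
            · intro j _; norm_num
            · intro j _
              have h1 := (htt j).1
              have h2 := (htt j).2
              nlinarith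
    rw [div_le_iff₀ hlam0]
    have hP2' : 0 < ∏ j ∈ Finset.range k, (1 + 2 * tt j) := by
      apply Finset.prod_pos
      intro j _; have := (htt j).1; linarith
    nlinarith
  -- abbreviations
  set H : ℕ → ℂ → ℂ := fun k => (SS U Wc ee tt dd k).1 with hHdef
  set uu : ℕ → ℂ → ℂ := fun k => (SS U Wc ee tt dd k).2.1 with huudef
  have hinv := InvP_all hU heeU hdense htt hdd hsame
  have hH0 : ∀ x, H 0 x = x := fun x => rfl
  have huu0 : ∀ y, uu 0 y = y := fun y => rfl
  -- step facts
  have hstep : ∀ k, ∃ gg : (ℂ → ℂ) × (ℂ → ℂ),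
      Spec U Wc ee tt dd k (SS U Wc ee tt dd k).1 (SS U Wc ee tt dd k).2.2 gg ∧
      (∀ x, H (k+1) x = gg.1 (H k x)) ∧
      (∀ y, uu (k+1) y = uu k (gg.2 y)) ∧
      (SS U Wc ee tt dd (k+1)).2.2 =
        Function.update (SS U Wc ee tt dd k).2.2 k (gg.1 (H k (ee k).1)) := by
    intro k
    obtain ⟨gg, hspec, hSS⟩ := SS_step hU heeU hdense htt hdd hsame k (hinv k)
    refine ⟨gg, hspec, fun x => ?_, fun y => ?_, by rw [hSS]⟩
    · show (SS U Wc ee tt dd (k+1)).1 x = gg.1 ((SS U Wc ee tt dd k).1 x)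
      rw [hSS]
      rfl
    · show (SS U Wc ee tt dd (k+1)).2.1 y = (SS U Wc ee tt dd k).2.1 (gg.2 y)
      rw [hSS]
      rfl
  -- geometric step bounds
  have hR1 : ∀ k x, dist (H k x) (H (k+1) x) ≤ ε/4 * (1/2)^k := by
    intro k x
    obtain ⟨gg, hspec, hH1, _, _⟩ := hstep k
    rw [hH1 x, dist_comm]
    exact hspec.2.2.2.2.1 (H k x)
  have huLip : ∀ k A B, dist (uu k A) (uu k B) ≤ lam * dist A B := by
    intro k A B
    have h1 := (hinv k).2.1 (uu k A) (uu k B)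
    have h2 := (hinv k).2.2.2.1 A
    have h3 := (hinv k).2.2.2.1 B
    rw [h2, h3] at h1
    have hQk := hQ k
    have hd0 : (0:ℝ) ≤ dist (uu k A) (uu k B) := dist_nonneg
    have h4 : (1/lam) * dist (uu k A) (uu k B) ≤ dist A B :=
      le_trans (mul_le_mul_of_nonneg_right hQk hd0) h1
    have h6 : lam * ((1/lam) * dist (uu k A) (uu k B)) = dist (uu k A) (uu k B) := by
      field_simp
    calc dist (uu k A) (uu k B) = lam * ((1/lam) * dist (uu k A) (uu k B)) := h6.symm
      _ ≤ lam * dist A B := mul_le_mul_of_nonneg_left h4 hlam0.le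
  have hR2 : ∀ k y, dist (uu k y) (uu (k+1) y) ≤ (lam * (ε/4)) * (1/2)^k := by
    intro k y
    obtain ⟨gg, hspec, _, hu1, _⟩ := hstep k
    rw [hu1 y]
    calc dist (uu k y) (uu k (gg.2 y)) ≤ lam * dist y (gg.2 y) := huLip k y (gg.2 y)
      _ ≤ lam * (ε/4 * (1/2)^k) := by
          apply mul_le_mul_of_nonneg_left ?_ (by linarith)
          have h4 := hspec.2.2.2.1 y
          have h5 := hspec.2.2.2.2.1 (gg.2 y)
          rw [h4] at h5
          exact h5
      _ = (lam * (ε/4)) * (1/2)^k := by ring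
  -- limits exist
  have hcauchy : ∀ x, CauchySeq (fun k => H k x) :=
    fun x => cauchySeq_of_le_geometric (1/2) (ε/4) (by norm_num) (fun k => hR1 k x)
  have hhex : ∀ x, ∃ l, Filter.Tendsto (fun k => H k x) Filter.atTop (nhds l) :=
    fun x => cauchySeq_tendsto_of_complete (hcauchy x)
  set hh : ℂ → ℂ := fun x => Classical.choose (hhex x) with hhhdef
  have htend : ∀ x, Filter.Tendsto (fun k => H k x) Filter.atTop (nhds (hh x)) :=
    fun x => Classical.choose_spec (hhex x)
  have htail : ∀ x k, dist (H k x) (hh x) ≤ (ε/4) * (1/2)^k / (1 - 1/2) :=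
    fun x k => dist_le_of_le_geometric_of_tendsto (1/2) (ε/4) (by norm_num)
      (fun n => hR1 n x) (htend x) k
  have hucauchy : ∀ y, CauchySeq (fun k => uu k y) :=
    fun y => cauchySeq_of_le_geometric (1/2) (lam * (ε/4)) (by norm_num) (fun k => hR2 k y)
  have huex : ∀ y, ∃ l, Filter.Tendsto (fun k => uu k y) Filter.atTop (nhds l) :=
    fun y => cauchySeq_tendsto_of_complete (hucauchy y)
  set uL : ℂ → ℂ := fun y => Classical.choose (huex y) with huLdef
  have hutend : ∀ y, Filter.Tendsto (fun k => uu k y) Filter.atTop (nhds (uL y)) :=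
    fun y => Classical.choose_spec (huex y)
  -- Lipschitz bounds for hh
  have hhLip : ∀ x y, dist x y / lam ≤ dist (hh x) (hh y) ∧
      dist (hh x) (hh y) ≤ lam * dist x y := by
    intro x y
    have hdt : Filter.Tendsto (fun k => dist (H k x) (H k y)) Filter.atTop
        (nhds (dist (hh x) (hh y))) := (htend x).dist (htend y)
    constructor
    · apply ge_of_tendsto hdt
      apply Filter.Eventually.of_forall
      intro k
      have h1 := (hinv k).2.1 x y
      have h2 := hQ k
      have h3 : dist x y / lam = (1/lam) * dist x y := by ring
      rw [h3]
      calc (1/lam) * dist x y ≤ (∏ j ∈ Finset.range k, (1 - tt j)) * dist x y :=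
            mul_le_mul_of_nonneg_right h2 dist_nonneg
        _ ≤ dist (H k x) (H k y) := h1
    · apply le_of_tendsto hdt
      apply Filter.Eventually.of_forall
      intro k
      calc dist (H k x) (H k y) ≤ (∏ j ∈ Finset.range k, (1 + tt j)) * dist x y :=
            (hinv k).1 x y
        _ ≤ lam * dist x y := mul_le_mul_of_nonneg_right (hP k) dist_nonneg
  -- identity off U
  have hhid : ∀ x ∉ U, hh x = x := by
    intro x hx
    have h1 : ∀ k, H k x = x := fun k => (hinv k).2.2.2.2.2.1 x hx
    have h2 : Filter.Tendsto (fun k => H k x) Filter.atTop (nhds x) := by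
      simp only [h1]
      exact tendsto_const_nhds
    exact tendsto_nhds_unique (htend x) h2
  -- distance bound
  have hhnear : ∀ x, dist (hh x) x ≤ ε/2 := by
    intro x
    have h1 := htail x 0
    rw [hH0 x] at h1
    rw [dist_comm]
    calc dist x (hh x) ≤ ε/4 * (1/2)^0 / (1 - 1/2) := h1
      _ = ε/2 := by ring
  -- maps K to K
  have hhK : ∀ x ∈ K, hh x ∈ K := by
    intro x hx
    apply hKcl.mem_of_tendsto (htend x)
    apply Filter.Eventually.of_forall
    intro k
    show (SS U Wc ee tt dd k).1 x ∈ K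
    by_cases hxU : x ∈ U
    · exact hUK ((hinv k).2.2.2.2.1 x hxU)
    · rw [(hinv k).2.2.2.2.2.1 x hxU]; exact hx
  -- the V → W property
  have hhVW : ∀ k, hh (ee k).1 ∈ Wc (ee k).2 := by
    intro k
    set q : ℂ := (SS U Wc ee tt dd (k+1)).2.2 k with hqdef
    have hqW : q ∈ Wc (ee k).2 := ((hinv (k+1)).2.2.2.2.2.2 k (by omega)).2
    have hstable : ∀ m, (SS U Wc ee tt dd (k+1+m)).2.2 k = q := by
      intro m
      induction m with
      | zero => rfl
      | succ m ih =>
        obtain ⟨gg, hspec, _, _, hupd⟩ := hstep (k+1+m)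
        have : k + 1 + (m+1) = (k+1+m) + 1 := by omega
        rw [this, hupd, Function.update_of_ne (by omega)]
        exact ih
    have hHconst : ∀ m, H (k+1+m) (ee k).1 = q := by
      intro m
      have h1 := ((hinv (k+1+m)).2.2.2.2.2.2 k (by omega)).1
      rw [hstable m] at h1
      exact h1.symm
    have h2 : Filter.Tendsto (fun m => H m (ee k).1) Filter.atTop (nhds q) := by
      apply Filter.Tendsto.congr' ?_ (tendsto_const_nhds (x := q))
      rw [Filter.EventuallyEq, Filter.eventually_atTop]
      exact ⟨k+1, fun m hm => (hHconst (m - (k+1)) ▸ (by rw [show k+1+(m-(k+1)) = m by omega]) :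
        H m (ee k).1 = q).symm⟩
    have := tendsto_nhds_unique (htend (ee k).1) h2
    rw [this]
    exact hqW
  -- surjectivity on K
  have huuK : ∀ k, ∀ y ∈ K, uu k y ∈ K := by
    intro k
    induction k with
    | zero => intro y hy; rw [huu0 y]; exact hy
    | succ k ih =>
      intro y hy
      obtain ⟨gg, hspec, _, hu1, _⟩ := hstep k
      rw [hu1 y]
      apply ih
      by_cases hgU : gg.2 y ∈ U
      · exact hUK hgU
      · have h3 := hspec.2.2.2.2.2.2.1 (gg.2 y) hgU
        have h4 := hspec.2.2.2.1 y
        rw [h3] at h4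
        rw [h4]
        exact hy
  refine ⟨hh, hhLip, hhid, hhnear, hhVW, hhK, ?_⟩
  intro y hy
  have huLK : uL y ∈ K := by
    apply hKcl.mem_of_tendsto (hutend y)
    exact Filter.Eventually.of_forall (fun k => huuK k y hy)
  refine ⟨uL y, huLK, ?_⟩
  have hbound : ∀ k, dist (hh (uL y)) y ≤
      lam * dist (uL y) (uu k y) + ε/4 * (1/2)^k / (1 - 1/2) := by
    intro k
    have h1 : H k (uu k y) = y := (hinv k).2.2.2.1 y
    calc dist (hh (uL y)) y ≤ dist (hh (uL y)) (hh (uu k y)) + dist (hh (uu k y)) y :=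
          dist_triangle _ _ _
      _ ≤ lam * dist (uL y) (uu k y) + ε/4 * (1/2)^k / (1 - 1/2) := by
          apply add_le_add ((hhLip _ _).2)
          have h7 : dist (hh (uu k y)) y = dist (hh (uu k y)) (H k (uu k y)) := by rw [h1]
          rw [h7, dist_comm]
          exact htail (uu k y) k
  have hzero : Filter.Tendsto (fun k => lam * dist (uL y) (uu k y) +
      ε/4 * (1/2)^k / (1 - 1/2)) Filter.atTop (nhds 0) := by
    have h1 : Filter.Tendsto (fun k => dist (uL y) (uu k y)) Filter.atTop (nhds 0) := by
      have := tendsto_const_nhds (x := uL y) (f := Filter.atTop (α := ℕ)) |>.dist (hutend y)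
      simpa using this
    have h2 : Filter.Tendsto (fun k : ℕ => ε/4 * (1/2:ℝ)^k / (1 - 1/2)) Filter.atTop (nhds 0) := by
      have h3 : Filter.Tendsto (fun k : ℕ => (1/2:ℝ)^k) Filter.atTop (nhds 0) :=
        tendsto_pow_atTop_nhds_zero_of_lt_one (by norm_num) (by norm_num)
      have := h3.const_mul (ε/4)
      have h4 := this.div_const (1 - 1/2)
      simpa using h4
    have := (h1.const_mul lam).add h2
    simpa using this
  have hd0 : dist (hh (uL y)) y ≤ 0 :=
    ge_of_tendsto hzero (Filter.Eventually.of_forall hbound)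
  have : dist (hh (uL y)) y = 0 := le_antisymm hd0 dist_nonneg
  exact dist_eq_zero.mp this

end Core4

/-- The square `J² = [-1,1]²` as a subset of `ℝ²`. -/
def Sq : Set (ℝ × ℝ) := Set.Icc (-1) 1 ×ˢ Set.Icc (-1) 1

/-- The open square `J̊² = (-1,1)²`. -/
def SqO : Set (ℝ × ℝ) := Set.Ioo (-1) 1 ×ˢ Set.Ioo (-1) 1

/-- The horizontal segment `J_s = J × {s}`. -/
def Js (s : ℝ) : Set (ℝ × ℝ) := Set.Icc (-1) 1 ×ˢ {s}

/-- The open horizontal segment `J̊_s = (-1,1) × {s}`. -/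
def JsO (s : ℝ) : Set (ℝ × ℝ) := Set.Ioo (-1) 1 ×ˢ {s}

/-- The boundary `∂J²` of the square. -/
def bdSq : Set (ℝ × ℝ) := frontier Sq

/-- The Euclidean distance on `ℝ²`. -/
noncomputable def dE (x y : ℝ × ℝ) : ℝ := Real.sqrt ((x.1 - y.1) ^ 2 + (x.2 - y.2) ^ 2)

/-- The Euclidean distance between two subsets of `ℝ²`. -/
noncomputable def dESet (A B : Set (ℝ × ℝ)) : ℝ := sInf (Set.image2 dE A B)

/-- The Euclidean diameter of a subset of `ℝ²`. -/
noncomputable def diamE (A : Set (ℝ × ℝ)) : ℝ := sSup (Set.image2 dE A A)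

/-- The embedding of `ℝ²` into `ℂ`. -/
def toC (p : ℝ × ℝ) : ℂ := ⟨p.1, p.2⟩

/-- The inverse embedding. -/
def fromC (z : ℂ) : ℝ × ℝ := (z.re, z.im)

lemma fromC_toC (p : ℝ × ℝ) : fromC (toC p) = p := rfl

lemma toC_fromC (z : ℂ) : toC (fromC z) = z := rfl

lemma toC_injective : Function.Injective toC := by
  intro p q h
  have h1 : fromC (toC p) = fromC (toC q) := by rw [h]
  rwa [fromC_toC, fromC_toC] at h1

lemma toC_eq (p : ℝ × ℝ) : toC p = (p.1 : ℂ) + (p.2 : ℂ) * Complex.I := by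
  apply Complex.ext <;> simp [toC]

lemma continuous_toC : Continuous toC := by
  have : Continuous fun p : ℝ × ℝ => (p.1 : ℂ) + (p.2 : ℂ) * Complex.I := by
    apply Continuous.add
    · exact Complex.continuous_ofReal.comp continuous_fst
    · exact (Complex.continuous_ofReal.comp continuous_snd).mul continuous_const
  have h2 : toC = fun p : ℝ × ℝ => (p.1 : ℂ) + (p.2 : ℂ) * Complex.I := by
    funext p; exact toC_eq p
  rw [h2]; exact this

lemma continuous_fromC : Continuous fromC :=
  Complex.continuous_re.prodMk Complex.continuous_im

lemma dE_eq (x y : ℝ × ℝ) : dE x y = dist (toC x) (toC y) := by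
  rw [Complex.dist_eq, Complex.norm_def, Complex.normSq_apply, dE]
  congr 1
  simp only [Complex.sub_re, Complex.sub_im, toC]
  ring

lemma dist_toC_le (p q : ℝ × ℝ) : dist (toC p) (toC q) ≤ 2 * dist p q := by
  calc dist (toC p) (toC q) = ‖toC p - toC q‖ := Complex.dist_eq _ _
    _ ≤ |(toC p - toC q).re| + |(toC p - toC q).im| := Complex.norm_le_abs_re_add_abs_im _
    _ = |p.1 - q.1| + |p.2 - q.2| := by simp [toC]
    _ ≤ dist p q + dist p q := by
        apply add_le_add
        · rw [Prod.dist_eq, Real.dist_eq]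
          exact le_max_left _ _ |>.trans_eq' rfl
        · rw [Prod.dist_eq, Real.dist_eq]
          exact le_max_right _ _ |>.trans_eq' rfl
    _ = 2 * dist p q := by ring

lemma SqO_subset_Sq : SqO ⊆ Sq :=
  Set.prod_mono Set.Ioo_subset_Icc_self Set.Ioo_subset_Icc_self

lemma isOpen_SqO : IsOpen SqO := isOpen_Ioo.prod isOpen_Ioo

lemma isCompact_Sq : IsCompact Sq := isCompact_Icc.prod isCompact_Icc

lemma isClosed_Sq : IsClosed Sq := isCompact_Sq.isClosed

lemma bdSq_disjoint_SqO : ∀ x ∈ bdSq, x ∉ SqO := by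
  intro x hx hxO
  rw [bdSq, isClosed_Sq.frontier_eq] at hx
  exact hx.2 (interior_maximal SqO_subset_Sq isOpen_SqO hxO)

theorem stmt3 (V W : ℕ → Set (ℝ × ℝ))
    (hVsub : ∀ n, V n ⊆ SqO) (hVcount : ∀ n, (V n).Countable)
    (hVdisj : ∀ m n : ℕ, m ≠ n → Disjoint (V m) (V n))
    (hVdense : ∀ n, Sq ⊆ closure (V n))
    (hWsub : ∀ n, W n ⊆ SqO)
    (hWdisj : ∀ m n : ℕ, m ≠ n → Disjoint (W m) (W n))
    (hWdense : ∀ n, Sq ⊆ closure (W n))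
    (lam : ℝ) (hlam : 1 < lam) (ε : ℝ) (hε : 0 < ε) :
    ∃ h : ↥Sq → ↥Sq, Function.Bijective h ∧
      (∀ x y : ↥Sq, dE (x : ℝ × ℝ) (y : ℝ × ℝ) / lam ≤ dE (h x : ℝ × ℝ) (h y : ℝ × ℝ) ∧
        dE (h x : ℝ × ℝ) (h y : ℝ × ℝ) ≤ lam * dE (x : ℝ × ℝ) (y : ℝ × ℝ)) ∧
      (∀ x : ↥Sq, (x : ℝ × ℝ) ∈ bdSq → h x = x) ∧
      (∀ x : ↥Sq, dE (h x : ℝ × ℝ) (x : ℝ × ℝ) < ε) ∧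
      (∀ n : ℕ, ∀ x : ↥Sq, (x : ℝ × ℝ) ∈ V n → (h x : ℝ × ℝ) ∈ W n) := by
  classical
  set Uc : Set ℂ := toC '' SqO with hUcdef
  set Kc : Set ℂ := toC '' Sq with hKcdef
  set Vc : ℕ → Set ℂ := fun n => toC '' (V n) with hVcdef
  set Wc : ℕ → Set ℂ := fun n => toC '' (W n) with hWcdef
  have hUc : IsOpen Uc := by
    rw [hUcdef, Set.image_eq_preimage_of_inverse fromC_toC toC_fromC]
    exact isOpen_SqO.preimage continuous_fromC
  have hKcl : IsClosed Kc := (isCompact_Sq.image continuous_toC).isClosed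
  have hUK : Uc ⊆ Kc := Set.image_mono SqO_subset_Sq
  have hdense : ∀ n, ∀ z ∈ Uc, ∀ r > 0, ∃ w ∈ Wc n, dist w z < r := by
    intro n z hz r hr
    obtain ⟨x, hx, rfl⟩ := hz
    have hxSq : x ∈ Sq := SqO_subset_Sq hx
    have hxcl : x ∈ closure (W n) := hWdense n hxSq
    obtain ⟨w', hw', hdw⟩ := Metric.mem_closure_iff.mp hxcl (r/2) (by linarith)
    refine ⟨toC w', ⟨w', hw', rfl⟩, ?_⟩
    calc dist (toC w') (toC x) ≤ 2 * dist w' x := dist_toC_le _ _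
      _ = 2 * dist x w' := by rw [dist_comm]
      _ < r := by linarith
  -- the countable set of labelled points
  set T : Set (ℂ × ℕ) := ⋃ n, (fun z => (z, n)) '' (Vc n) with hTdef
  have hTmem : ∀ z n, (z, n) ∈ T ↔ z ∈ Vc n := by
    intro z n
    constructor
    · intro hmem
      obtain ⟨m, ⟨z', hz', heq⟩⟩ := Set.mem_iUnion.mp hmem
      have h1 : z' = z := congrArg Prod.fst heq
      have h2 : m = n := congrArg Prod.snd heq
      subst h1
      subst h2
      exact hz'
    · intro hz
      exact Set.mem_iUnion.mpr ⟨n, ⟨z, hz, rfl⟩⟩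
  have hTcount : T.Countable :=
    Set.countable_iUnion (fun n => (((hVcount n).image toC).image _))
  by_cases hTne : T.Nonempty
  · obtain ⟨ee, hee⟩ : ∃ f : ℕ → ℂ × ℕ, T = Set.range f := hTcount.exists_eq_range hTne
    have heeT : ∀ k, (ee k).1 ∈ Vc (ee k).2 := by
      intro k
      have h1 : ee k ∈ T := hee ▸ Set.mem_range_self k
      have h2 : ((ee k).1, (ee k).2) ∈ T := h1
      exact (hTmem _ _).mp h2
    have heeU : ∀ k, (ee k).1 ∈ Uc := by
      intro k
      obtain ⟨x, hx, hxe⟩ := heeT k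
      exact ⟨x, hVsub _ hx, hxe⟩
    have hsame : ∀ j k, (ee j).1 = (ee k).1 → (ee j).2 = (ee k).2 := by
      intro j k hjk
      by_contra hne
      have h1 := heeT j
      have h2 := heeT k
      rw [hjk] at h1
      have hdisj : Disjoint (Vc (ee j).2) (Vc (ee k).2) := by
        rw [hVcdef]
        rw [Set.disjoint_image_iff toC_injective]
        exact hVdisj _ _ hne
      exact (hdisj.ne_of_mem h1 h2) rfl
    obtain ⟨hh, hhLip, hhid, hhnear, hhVW, hhK, hhsurj⟩ :=
      core_lemma Uc Kc hUc hUK hKcl Wc ee heeU hsame hdense lam ε hlam hε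
    -- build the final map
    have hmem : ∀ x : ↥Sq, fromC (hh (toC (x : ℝ × ℝ))) ∈ Sq := by
      intro x
      have h1 : toC (x : ℝ × ℝ) ∈ Kc := ⟨x, x.2, rfl⟩
      have h2 : hh (toC (x : ℝ × ℝ)) ∈ Kc := hhK _ h1
      obtain ⟨s, hs, hse⟩ := h2
      rw [← hse, fromC_toC]
      exact hs
    refine ⟨fun x => ⟨fromC (hh (toC (x : ℝ × ℝ))), hmem x⟩, ?_, ?_, ?_, ?_, ?_⟩
    · constructor
      · intro x y hxy
        have h1 : fromC (hh (toC (x:ℝ×ℝ))) = fromC (hh (toC (y:ℝ×ℝ))) :=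
          congrArg Subtype.val hxy
        have h2 : hh (toC (x:ℝ×ℝ)) = hh (toC (y:ℝ×ℝ)) := by
          rw [← toC_fromC (hh (toC (x:ℝ×ℝ))), ← toC_fromC (hh (toC (y:ℝ×ℝ))), h1]
        have h3 := (hhLip (toC (x:ℝ×ℝ)) (toC (y:ℝ×ℝ))).1
        rw [h2, dist_self] at h3
        have h4 : dist (toC (x:ℝ×ℝ)) (toC (y:ℝ×ℝ)) ≤ 0 := by
          have hlam0 : (0:ℝ) < lam := by linarith
          rw [div_le_iff₀ hlam0] at h3
          simpa using h3
        have h5 : toC (x:ℝ×ℝ) = toC (y:ℝ×ℝ) := by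
          rw [← dist_le_zero]; exact h4
        exact Subtype.ext (toC_injective h5)
      · intro y
        have h1 : toC (y : ℝ × ℝ) ∈ Kc := ⟨y, y.2, rfl⟩
        obtain ⟨z, hzK, hzy⟩ := hhsurj _ h1
        obtain ⟨x, hxSq, hxz⟩ := hzK
        refine ⟨⟨x, hxSq⟩, ?_⟩
        apply Subtype.ext
        show fromC (hh (toC x)) = (y : ℝ × ℝ)
        rw [hxz, hzy, fromC_toC]
    · intro x y
      have h1 := hhLip (toC (x:ℝ×ℝ)) (toC (y:ℝ×ℝ))
      constructor
      · rw [dE_eq, dE_eq]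
        show dist (toC (x:ℝ×ℝ)) (toC (y:ℝ×ℝ)) / lam ≤
          dist (toC (fromC (hh (toC (x:ℝ×ℝ))))) (toC (fromC (hh (toC (y:ℝ×ℝ)))))
        rw [toC_fromC, toC_fromC]
        exact h1.1
      · rw [dE_eq, dE_eq]
        show dist (toC (fromC (hh (toC (x:ℝ×ℝ))))) (toC (fromC (hh (toC (y:ℝ×ℝ))))) ≤
          lam * dist (toC (x:ℝ×ℝ)) (toC (y:ℝ×ℝ))
        rw [toC_fromC, toC_fromC]
        exact h1.2
    · intro x hx
      have h1 : toC (x : ℝ×ℝ) ∉ Uc := by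
        intro hmem'
        obtain ⟨p, hp, hpe⟩ := hmem'
        rw [toC_injective hpe] at hp
        exact bdSq_disjoint_SqO _ hx hp
      apply Subtype.ext
      show fromC (hh (toC (x:ℝ×ℝ))) = (x : ℝ×ℝ)
      rw [hhid _ h1, fromC_toC]
    · intro x
      rw [dE_eq]
      show dist (toC (fromC (hh (toC (x:ℝ×ℝ))))) (toC (x:ℝ×ℝ)) < ε
      rw [toC_fromC]
      calc dist (hh (toC (x:ℝ×ℝ))) (toC (x:ℝ×ℝ)) ≤ ε/2 := hhnear _
        _ < ε := by linarith
    · intro n x hxV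
      have h1 : (toC (x:ℝ×ℝ), n) ∈ T := (hTmem _ _).mpr ⟨x, hxV, rfl⟩
      rw [hee] at h1
      obtain ⟨k, hk⟩ := h1
      have h2 := hhVW k
      rw [hk] at h2
      obtain ⟨w, hwW, hwe⟩ := h2
      show fromC (hh (toC (x:ℝ×ℝ))) ∈ W n
      rw [← hwe, fromC_toC]
      exact hwW
  · -- T is empty : all V n are empty, identity works
    have hVempty : ∀ n, ∀ x, x ∉ V n := by
      intro n x hx
      exact hTne ⟨(toC x, n), (hTmem _ _).mpr ⟨x, hx, rfl⟩⟩
    have hdE0 : ∀ x : ℝ × ℝ, dE x x = 0 := by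
      intro x; simp [dE]
    have hdEnn : ∀ x y : ℝ × ℝ, 0 ≤ dE x y := by
      intro x y; exact Real.sqrt_nonneg _
    refine ⟨id, Function.bijective_id, ?_, fun x _ => rfl, ?_, ?_⟩
    · intro x y
      constructor
      · apply div_le_self (hdEnn _ _) (by linarith)
      · exact le_mul_of_one_le_left (hdEnn _ _) (by linarith)
    · intro x
      rw [show (id x : ↥Sq) = x from rfl, hdE0]
      exact hε
    · intro n x hx
      exact absurd hx (hVempty n _)
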